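/- Consider an uncertain optimization problem with decision space ℝ^n, scenario space ℝ^M, a convex set X ⊆ ℝ^n, objective f : ℝ^n × ℝ^M → ℝ and constraints F_1, …, F_m : ℝ^n × ℝ^M → ℝ, and a metric d on ℝ^n. Let U' = {ξ¹, …, ξ^N} ⊆ ℝ^M be finite and U = conv(U') its convex hull. Assume each F_i and f are jointly quasiconvex as functions on ℝ^n × ℝ^M (i.e. quasiconvex in the pair (y, ξ)), and that for every x ∈ ℝ^n the function y ↦ d(x, y) is quasiconvex. Then a point x ∈ X is recoverable-robust with respect to U if and only if it is recoverable-robust with respect to U'. -/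
import Mathlib


/-! **Statement 6.** For jointly quasiconvex objective and constraints and a recovery metric
that is quasiconvex in its second argument, the recoverable-robust solutions with respect to
a polytope `U = conv{ξ¹, …, ξ^N}` coincide with those with respect to its finitely many
extreme candidates `U' = {ξ¹, …, ξ^N}`. -/

section

variable {n mM m : ℕ}

/-- `(x, y)` is feasible for `Rec(U)`. -/
def RecFeasible (X : Set (Fin n → ℝ)) (F : (Fin n → ℝ) → (Fin mM → ℝ) → Fin m → ℝ)
    (U : Set (Fin mM → ℝ)) (x : Fin n → ℝ) (y : (Fin mM → ℝ) → (Fin n → ℝ)) : Prop :=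
  x ∈ X ∧ ∀ ξ ∈ U, y ξ ∈ X ∧ ∀ i, F (y ξ) ξ i ≤ 0

/-- Worst-case objective value, in the extended reals. -/
noncomputable def fObj (f : (Fin n → ℝ) → (Fin mM → ℝ) → ℝ) (U : Set (Fin mM → ℝ))
    (y : (Fin mM → ℝ) → (Fin n → ℝ)) : EReal :=
  ⨆ ξ ∈ U, (f (y ξ) ξ : EReal)

/-- Worst-case recovery cost w.r.t. the metric `d`, in the extended reals. -/
noncomputable def rObj (d : (Fin n → ℝ) → (Fin n → ℝ) → ℝ) (U : Set (Fin mM → ℝ))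
    (x : Fin n → ℝ) (y : (Fin mM → ℝ) → (Fin n → ℝ)) : EReal :=
  ⨆ ξ ∈ U, (d x (y ξ) : EReal)

/-- Pareto efficiency for `Rec(U)`. -/
def ParetoEfficient (X : Set (Fin n → ℝ)) (f : (Fin n → ℝ) → (Fin mM → ℝ) → ℝ)
    (F : (Fin n → ℝ) → (Fin mM → ℝ) → Fin m → ℝ) (d : (Fin n → ℝ) → (Fin n → ℝ) → ℝ)
    (U : Set (Fin mM → ℝ)) (x : Fin n → ℝ) (y : (Fin mM → ℝ) → (Fin n → ℝ)) : Prop :=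
  RecFeasible X F U x y ∧
    ¬ ∃ x' y', RecFeasible X F U x' y' ∧
      fObj f U y' ≤ fObj f U y ∧ rObj d U x' y' ≤ rObj d U x y ∧
      (fObj f U y' < fObj f U y ∨ rObj d U x' y' < rObj d U x y)

/-- `x` is recoverable-robust with respect to `U`. -/
def RecoverableRobust (X : Set (Fin n → ℝ)) (f : (Fin n → ℝ) → (Fin mM → ℝ) → ℝ)
    (F : (Fin n → ℝ) → (Fin mM → ℝ) → Fin m → ℝ) (d : (Fin n → ℝ) → (Fin n → ℝ) → ℝ)
    (U : Set (Fin mM → ℝ)) (x : Fin n → ℝ) : Prop :=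
  ∃ y, ParetoEfficient X f F d U x y

lemma ext_lemma {N : ℕ} (X : Set (Fin n → ℝ)) (hX : Convex ℝ X)
    (f : (Fin n → ℝ) → (Fin mM → ℝ) → ℝ)
    (F : (Fin n → ℝ) → (Fin mM → ℝ) → Fin m → ℝ)
    (d : (Fin n → ℝ) → (Fin n → ℝ) → ℝ)
    (hF : ∀ i, QuasiconvexOn ℝ Set.univ (fun p : (Fin n → ℝ) × (Fin mM → ℝ) => F p.1 p.2 i))
    (hf : QuasiconvexOn ℝ Set.univ (fun p : (Fin n → ℝ) × (Fin mM → ℝ) => f p.1 p.2))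
    (hd_qc : ∀ x, QuasiconvexOn ℝ Set.univ (d x))
    (ξ : Fin N → (Fin mM → ℝ)) (y : (Fin mM → ℝ) → (Fin n → ℝ))
    (hfeas : ∀ j, y (ξ j) ∈ X ∧ ∀ i, F (y (ξ j)) (ξ j) i ≤ 0) :
    ∃ Y : (Fin mM → ℝ) → (Fin n → ℝ),
      (∀ q ∈ convexHull ℝ (Set.range ξ), Y q ∈ X ∧ ∀ i, F (Y q) q i ≤ 0) ∧
      fObj f (convexHull ℝ (Set.range ξ)) Y ≤ fObj f (Set.range ξ) y ∧
      ∀ x', rObj d (convexHull ℝ (Set.range ξ)) x' Y ≤ rObj d (Set.range ξ) x' y := by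
  classical
  set g : Fin N → (Fin n → ℝ) × (Fin mM → ℝ) := fun j => (y (ξ j), ξ j) with hg
  set S := convexHull ℝ (Set.range g) with hSdef
  have hproj : ∀ q ∈ convexHull ℝ (Set.range ξ), ∃ p, p ∈ S ∧ p.2 = q := by
    intro q hq
    have himg : (LinearMap.snd ℝ (Fin n → ℝ) (Fin mM → ℝ)) '' S
        = convexHull ℝ (Set.range ξ) := by
      rw [hSdef, LinearMap.image_convexHull]
      congr 1
      rw [← Set.range_comp]
      rfl
    rw [← himg] at hq
    obtain ⟨p, hpS, hpq⟩ := hq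
    exact ⟨p, hpS, hpq⟩
  choose! p hpS hp2 using hproj
  have hsub : ∀ (C : Set ((Fin n → ℝ) × (Fin mM → ℝ))), Convex ℝ C → (∀ j, g j ∈ C) →
      S ⊆ C := fun C hC hgC => convexHull_min (Set.range_subset_iff.2 hgC) hC
  have hmem : ∀ q, q ∈ convexHull ℝ (Set.range ξ) → ((p q).1, q) ∈ S := by
    intro q hq
    have : ((p q).1, q) = p q := Prod.ext rfl (hp2 q hq).symm
    rw [this]
    exact hpS q hq
  refine ⟨fun q => (p q).1, ?_, ?_, ?_⟩
  · intro q hq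
    constructor
    · have hCX : Convex ℝ ((Prod.fst : (Fin n → ℝ) × (Fin mM → ℝ) → (Fin n → ℝ)) ⁻¹' X) :=
        hX.linear_preimage (LinearMap.fst ℝ _ _)
      have h := hsub _ hCX (fun j => (hfeas j).1) (hmem q hq)
      exact h
    · intro i
      have hC : Convex ℝ {r : (Fin n → ℝ) × (Fin mM → ℝ) | F r.1 r.2 i ≤ 0} := by
        have h0 : Convex ℝ {r ∈ (Set.univ : Set ((Fin n → ℝ) × (Fin mM → ℝ))) |
            F r.1 r.2 i ≤ (0:ℝ)} := hF i 0
        rwa [Set.sep_univ] at h0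
      exact hsub _ hC (fun j => (hfeas j).2 i) (hmem q hq)
  · refine iSup₂_le fun q hq => ?_
    have hne : Nonempty (Fin N) := by
      obtain ⟨r, j, rfl⟩ := (convexHull_nonempty_iff.1 ⟨q, hq⟩ : (Set.range ξ).Nonempty)
      exact ⟨j⟩
    set b : ℝ := Finset.univ.sup' Finset.univ_nonempty (fun j => f (y (ξ j)) (ξ j)) with hb
    have hC : Convex ℝ {r : (Fin n → ℝ) × (Fin mM → ℝ) | f r.1 r.2 ≤ b} := by
      have h0 : Convex ℝ {r ∈ (Set.univ : Set ((Fin n → ℝ) × (Fin mM → ℝ))) |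
          f r.1 r.2 ≤ b} := hf b
      rwa [Set.sep_univ] at h0
    have hball : ∀ j, f (y (ξ j)) (ξ j) ≤ b := fun j =>
      Finset.le_sup' (fun j => f (y (ξ j)) (ξ j)) (Finset.mem_univ j)
    have hle : f ((p q).1) q ≤ b :=
      hsub _ hC (fun j => hball j) (hmem q hq)
    obtain ⟨j0, _, hj0⟩ := Finset.exists_mem_eq_sup' Finset.univ_nonempty
      (fun j => f (y (ξ j)) (ξ j))
    refine le_trans ?_ (le_iSup₂_of_le (ξ j0) ⟨j0, rfl⟩ le_rfl)
    exact_mod_cast hle.trans (le_of_eq (hb ▸ hj0))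
  · intro x'
    refine iSup₂_le fun q hq => ?_
    have hne : Nonempty (Fin N) := by
      obtain ⟨r, j, rfl⟩ := (convexHull_nonempty_iff.1 ⟨q, hq⟩ : (Set.range ξ).Nonempty)
      exact ⟨j⟩
    set c : ℝ := Finset.univ.sup' Finset.univ_nonempty (fun j => d x' (y (ξ j))) with hc
    have hC1 : Convex ℝ {z : Fin n → ℝ | d x' z ≤ c} := by
      have h0 : Convex ℝ {z ∈ (Set.univ : Set (Fin n → ℝ)) | d x' z ≤ c} := hd_qc x' c
      rwa [Set.sep_univ] at h0
    have hC : Convex ℝ ((Prod.fst : (Fin n → ℝ) × (Fin mM → ℝ) → (Fin n → ℝ)) ⁻¹'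
        {z | d x' z ≤ c}) := hC1.linear_preimage (LinearMap.fst ℝ _ _)
    have hcall : ∀ j, d x' (y (ξ j)) ≤ c := fun j =>
      Finset.le_sup' (fun j => d x' (y (ξ j))) (Finset.mem_univ j)
    have hle : d x' ((p q).1) ≤ c := by
      have h := hsub _ hC (fun j => hcall j) (hmem q hq)
      exact h
    obtain ⟨j0, _, hj0⟩ := Finset.exists_mem_eq_sup' Finset.univ_nonempty
      (fun j => d x' (y (ξ j)))
    refine le_trans ?_ (le_iSup₂_of_le (ξ j0) ⟨j0, rfl⟩ le_rfl)
    exact_mod_cast hle.trans (le_of_eq (hc ▸ hj0))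


theorem stmt6 (X : Set (Fin n → ℝ)) (hX : Convex ℝ X)
    (f : (Fin n → ℝ) → (Fin mM → ℝ) → ℝ)
    (F : (Fin n → ℝ) → (Fin mM → ℝ) → Fin m → ℝ)
    (d : (Fin n → ℝ) → (Fin n → ℝ) → ℝ)
    -- `d` is a metric on `ℝ^n`:
    (hd_self : ∀ x y, d x y = 0 ↔ x = y)
    (hd_symm : ∀ x y, d x y = d y x)
    (hd_triangle : ∀ x y z, d x z ≤ d x y + d y z)
    -- joint quasiconvexity of the constraints and the objective in `(y, ξ)`:
    (hF : ∀ i, QuasiconvexOn ℝ Set.univ (fun p : (Fin n → ℝ) × (Fin mM → ℝ) => F p.1 p.2 i))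
    (hf : QuasiconvexOn ℝ Set.univ (fun p : (Fin n → ℝ) × (Fin mM → ℝ) => f p.1 p.2))
    -- quasiconvexity of the recovery costs in the second argument:
    (hd_qc : ∀ x, QuasiconvexOn ℝ Set.univ (d x))
    {N : ℕ} (ξ : Fin N → (Fin mM → ℝ)) :
    ∀ x ∈ X, (RecoverableRobust X f F d (convexHull ℝ (Set.range ξ)) x ↔
      RecoverableRobust X f F d (Set.range ξ) x) := by
  intro x hx
  have hsub : Set.range ξ ⊆ convexHull ℝ (Set.range ξ) := subset_convexHull ℝ _
  have mono_f : ∀ z, fObj f (Set.range ξ) z ≤ fObj f (convexHull ℝ (Set.range ξ)) z :=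
    fun z => iSup₂_le fun q hq => le_iSup₂_of_le q (hsub hq) le_rfl
  have mono_r : ∀ x' z, rObj d (Set.range ξ) x' z ≤
      rObj d (convexHull ℝ (Set.range ξ)) x' z :=
    fun x' z => iSup₂_le fun q hq => le_iSup₂_of_le q (hsub hq) le_rfl
  constructor
  · rintro ⟨Y, hYfeas, hYopt⟩
    refine ⟨Y, ⟨hYfeas.1, fun q hq => hYfeas.2 q (hsub hq)⟩, ?_⟩
    rintro ⟨x', y', ⟨hx'X, hfeas'⟩, hfle, hrle, hstrict⟩
    obtain ⟨Y', hY'feas, hY'f, hY'r⟩ := ext_lemma X hX f F d hF hf hd_qc ξ y'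
      (fun j => hfeas' (ξ j) ⟨j, rfl⟩)
    apply hYopt
    refine ⟨x', Y', ⟨hx'X, hY'feas⟩, hY'f.trans (hfle.trans (mono_f Y)),
      (hY'r x').trans (hrle.trans (mono_r x Y)), ?_⟩
    rcases hstrict with h | h
    · exact Or.inl (lt_of_le_of_lt hY'f (lt_of_lt_of_le h (mono_f Y)))
    · exact Or.inr (lt_of_le_of_lt (hY'r x') (lt_of_lt_of_le h (mono_r x Y)))
  · rintro ⟨y, hyfeas, hyopt⟩
    obtain ⟨Y, hYfeas, hYf, hYr⟩ := ext_lemma X hX f F d hF hf hd_qc ξ y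
      (fun j => hyfeas.2 (ξ j) ⟨j, rfl⟩)
    refine ⟨Y, ⟨hx, hYfeas⟩, ?_⟩
    rintro ⟨x', Y', ⟨hx'X, hfeas'⟩, hfle, hrle, hstrict⟩
    apply hyopt
    refine ⟨x', Y', ⟨hx'X, fun q hq => hfeas' q (hsub hq)⟩,
      (mono_f Y').trans (hfle.trans hYf),
      (mono_r x' Y').trans (hrle.trans (hYr x)), ?_⟩
    rcases hstrict with h | h
    · exact Or.inl (lt_of_le_of_lt (mono_f Y') (lt_of_lt_of_le h hYf))
    · exact Or.inr (lt_of_le_of_lt (mono_r x' Y') (lt_of_lt_of_le h (hYr x)))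


end
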